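/- arXiv:1808.00372 — 5 statements merged into one kernel-verified Lean document; each statement's English description precedes it below -/
import Mathlib

section
/- (Foster's theorem) Let G be a simple connected graph with n nodes. Then the sum over all edges ij of G of the effective resistance r_{ij} between i and j equals n - 1. -/
open Finset

variable {V : Type*}

/-- Normalized adjacency matrix `P = D^{-1/2} A D^{-1/2}`. -/
noncomputable def normAdj [Fintype V] (G : SimpleGraph V) [DecidableRel G.Adj] :
    Matrix V V ℝ :=
  Matrix.of fun i j =>
    if G.Adj i j then 1 / Real.sqrt ((G.degree i : ℝ) * (G.degree j : ℝ)) else 0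

lemma normAdj_isHermitian [Fintype V] (G : SimpleGraph V) [DecidableRel G.Adj] :
    (normAdj G).IsHermitian := by
  ext i j
  simp only [Matrix.conjTranspose_apply, normAdj, Matrix.of_apply, star_trivial]
  by_cases h : G.Adj i j
  · rw [if_pos h, if_pos ((G.adj_comm i j).mp h), mul_comm]
  · rw [if_neg h, if_neg (fun h' => h ((G.adj_comm j i).mp h'))]

/-- `μ` is an eigenvalue of `M`. -/
def IsEigenvalue {W : Type*} [Fintype W] (M : Matrix W W ℝ) (μ : ℝ) : Prop :=
  ∃ v : W → ℝ, v ≠ 0 ∧ M.mulVec v = μ • v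

/-- Multiplicity of `μ` as an eigenvalue of `M` (dimension of the eigenspace). -/
noncomputable def eigMult {W : Type*} [Fintype W] [DecidableEq W]
    (M : Matrix W W ℝ) (μ : ℝ) : ℕ :=
  Module.finrank ℝ (LinearMap.ker (Matrix.toLin' (M - μ • (1 : Matrix W W ℝ))))

/-- `r` is the effective-resistance function of `G`: `r i j = φ i - φ j` where
`L φ = e_i - e_j`. -/
def IsEffRes [Fintype V] [DecidableEq V] (G : SimpleGraph V) [DecidableRel G.Adj]
    (r : V → V → ℝ) : Prop :=
  ∀ i j : V, ∃ φ : V → ℝ,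
    (G.lapMatrix ℝ).mulVec φ =
      (fun k => (if k = i then (1 : ℝ) else 0) - (if k = j then (1 : ℝ) else 0)) ∧
    r i j = φ i - φ j

/-- `T` is the expected-hitting-time function of the simple random walk on `G`. -/
def IsHitting [Fintype V] (G : SimpleGraph V) [DecidableRel G.Adj] (T : V → V → ℝ) : Prop :=
  (∀ j, T j j = 0) ∧
  ∀ i j : V, i ≠ j → T i j = 1 + (∑ k ∈ G.neighborFinset i, T k j) / (G.degree i : ℝ)

/-- Kemeny constant `∑_{λ eigenvalue ≠ 1} 1/(1-λ)` of the random walk on `G`. -/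
noncomputable def kemeny [Fintype V] [DecidableEq V] (G : SimpleGraph V) [DecidableRel G.Adj]
    (hP : (normAdj G).IsHermitian) : ℝ :=
  ∑ i, if hP.eigenvalues i = 1 then 0 else 1 / (1 - hP.eigenvalues i)

/-- Kirchhoff index. -/
noncomputable def kirchhoff [Fintype V] (r : V → V → ℝ) : ℝ :=
  (∑ i, ∑ j, r i j) / 2

/-- Additive degree-Kirchhoff index. -/
noncomputable def addKirchhoff [Fintype V] (G : SimpleGraph V) [DecidableRel G.Adj]
    (r : V → V → ℝ) : ℝ :=
  (∑ i, ∑ j, ((G.degree i : ℝ) + (G.degree j : ℝ)) * r i j) / 2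

/-- Multiplicative degree-Kirchhoff index. -/
noncomputable def mulKirchhoff [Fintype V] (G : SimpleGraph V) [DecidableRel G.Adj]
    (r : V → V → ℝ) : ℝ :=
  (∑ i, ∑ j, (G.degree i : ℝ) * (G.degree j : ℝ) * r i j) / 2

/-- The adjacency relation of the q-subdivision graph. -/
def qSubAdj (G : SimpleGraph V) (q : ℕ) :
    (V ⊕ (G.edgeSet × Fin q)) → (V ⊕ (G.edgeSet × Fin q)) → Prop
  | Sum.inl u, Sum.inr p => u ∈ (p.1 : Sym2 V)
  | Sum.inr p, Sum.inl u => u ∈ (p.1 : Sym2 V)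
  | _, _ => False

/-- The q-subdivision graph `S_q(G)`: every edge `uv` of `G` is replaced by `q`
disjoint paths of length 2. -/
def qSubdivision (G : SimpleGraph V) (q : ℕ) :
    SimpleGraph (V ⊕ (G.edgeSet × Fin q)) where
  Adj := qSubAdj G q
  symm := by
    constructor
    intro a b h
    cases a <;> cases b <;> simp_all [qSubAdj]
  loopless := by
    constructor
    intro a h
    cases a <;> simp_all [qSubAdj]

noncomputable instance (G : SimpleGraph V) (q : ℕ) :
    DecidableRel (qSubdivision G q).Adj := Classical.decRel _

noncomputable instance [Fintype V] (G : SimpleGraph V) : Fintype G.edgeSet :=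
  Fintype.ofFinite _

open Matrix in
lemma sum_mulVec_lap' [Fintype V] [DecidableEq V] (G : SimpleGraph V) [DecidableRel G.Adj]
    (x : V → ℝ) : ∑ i, (G.lapMatrix ℝ *ᵥ x) i = 0 := by
  have hsym := G.isSymm_lapMatrix (R := ℝ)
  have hc : ∀ k, ∑ i, G.lapMatrix ℝ i k = 0 := by
    intro k
    have h1 := congrFun (G.lapMatrix_mulVec_const_eq_zero (R := ℝ)) k
    simp [Matrix.mulVec, dotProduct] at h1
    calc ∑ i, G.lapMatrix ℝ i k = ∑ i, G.lapMatrix ℝ k i :=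
          Finset.sum_congr rfl fun i _ => hsym.apply k i
      _ = 0 := h1
  calc ∑ i, (G.lapMatrix ℝ *ᵥ x) i = ∑ i, ∑ k, G.lapMatrix ℝ i k * x k := rfl
    _ = ∑ k, (∑ i, G.lapMatrix ℝ i k) * x k := by
        rw [Finset.sum_comm]; simp [Finset.sum_mul]
    _ = 0 := by simp [hc]

open Matrix in
lemma exists_lap_solution [Fintype V] [DecidableEq V] (G : SimpleGraph V) [DecidableRel G.Adj]
    (hconn : G.Connected) (b : V → ℝ) (hb : ∑ i, b i = 0) :
    ∃ x, G.lapMatrix ℝ *ᵥ x = b := by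
  classical
  set f := Matrix.toLin' (G.lapMatrix ℝ) with hf
  obtain ⟨v₀⟩ := hconn.nonempty
  let s : (V → ℝ) →ₗ[ℝ] ℝ :=
    { toFun := fun x => ∑ i, x i
      map_add' := by intro x y; simp [Finset.sum_add_distrib]
      map_smul' := by intro c x; simp [Finset.mul_sum] }
  have hs_surj : LinearMap.range s = ⊤ := by
    rw [LinearMap.range_eq_top]
    intro c
    exact ⟨Pi.single v₀ c, by simp [s, Pi.single_apply]⟩
  have hcard : Fintype.card G.ConnectedComponent = 1 := by
    rw [Fintype.card_eq_one_iff]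
    refine ⟨G.connectedComponentMk v₀, ?_⟩
    intro c
    induction c using SimpleGraph.ConnectedComponent.ind with
    | _ v => exact SimpleGraph.ConnectedComponent.eq.mpr (hconn.preconnected v v₀)
  have hker : Module.finrank ℝ (LinearMap.ker f) = 1 := by
    rw [← G.card_connectedComponent_eq_finrank_ker_toLin'_lapMatrix, hcard]
  have hdim : Module.finrank ℝ (V → ℝ) = Fintype.card V :=
    Module.finrank_fintype_fun_eq_card ℝ
  have hrn : Module.finrank ℝ (LinearMap.range f) + Module.finrank ℝ (LinearMap.ker f)
      = Fintype.card V := by rw [LinearMap.finrank_range_add_finrank_ker, hdim]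
  have hrns : Module.finrank ℝ (LinearMap.range s) + Module.finrank ℝ (LinearMap.ker s)
      = Fintype.card V := by rw [LinearMap.finrank_range_add_finrank_ker, hdim]
  have hrs : Module.finrank ℝ (LinearMap.range s) = 1 := by
    rw [hs_surj]; simp
  have hle : LinearMap.range f ≤ LinearMap.ker s := by
    rintro _ ⟨x, rfl⟩
    have : s (f x) = ∑ i, (G.lapMatrix ℝ *ᵥ x) i := by
      simp [s, hf, Matrix.toLin'_apply]
    exact LinearMap.mem_ker.mpr (this.trans (sum_mulVec_lap' G x))
  have heq : LinearMap.range f = LinearMap.ker s :=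
    Submodule.eq_of_le_of_finrank_le hle (by omega)
  have hbmem : b ∈ LinearMap.range f := by
    rw [heq]
    exact LinearMap.mem_ker.mpr hb
  obtain ⟨x, hx⟩ := hbmem
  exact ⟨x, by rw [← Matrix.toLin'_apply]; exact hx⟩

open Matrix in
lemma lap_diff_unique [Fintype V] [DecidableEq V] (G : SimpleGraph V) [DecidableRel G.Adj]
    (hconn : G.Connected) {φ ψ : V → ℝ}
    (h : G.lapMatrix ℝ *ᵥ φ = G.lapMatrix ℝ *ᵥ ψ) (i j : V) :
    φ i - φ j = ψ i - ψ j := by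
  have h0 : Matrix.toLin' (G.lapMatrix ℝ) (φ - ψ) = 0 := by
    rw [map_sub]
    simp only [Matrix.toLin'_apply, h]
    simp
  have h1 := (G.lapMatrix_mulVec_eq_zero_iff_forall_reachable (x := φ - ψ)).mp h0 i j
    (hconn.preconnected i j)
  simp only [Pi.sub_apply] at h1
  linarith

open Matrix in
/-- Foster's theorem: the sum of effective resistances over all edges is `n-1`.
(The sum over ordered adjacent pairs is twice the sum over edges.) -/
theorem stmt3 [Fintype V] [DecidableEq V] (G : SimpleGraph V) [DecidableRel G.Adj]
    (hconn : G.Connected) (r : V → V → ℝ) (hr : IsEffRes G r) :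
    ∑ i, ∑ j, (if G.Adj i j then r i j else 0) = 2 * ((Fintype.card V : ℝ) - 1) := by
  classical
  obtain ⟨v₀⟩ := hconn.nonempty
  have hne : Nonempty V := ⟨v₀⟩
  have hn0 : (Fintype.card V : ℝ) ≠ 0 := Nat.cast_ne_zero.mpr Fintype.card_ne_zero
  -- choose potentials x j with L (x j) = e_j - 1/n
  have hx : ∀ j : V, ∃ x : V → ℝ, G.lapMatrix ℝ *ᵥ x =
      fun k => (if k = j then (1:ℝ) else 0) - 1 / (Fintype.card V : ℝ) := by
    intro j
    apply exists_lap_solution G hconn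
    rw [Finset.sum_sub_distrib]
    simp
  choose x hxs using hx
  -- formula for r
  have hrf : ∀ i j, r i j = (x i i + x j j) - (x j i + x i j) := by
    intro i j
    obtain ⟨φ, hφ, hrij⟩ := hr i j
    have hmv : G.lapMatrix ℝ *ᵥ (x i - x j) = G.lapMatrix ℝ *ᵥ φ := by
      rw [Matrix.mulVec_sub, hxs i, hxs j, hφ]
      ext k
      simp only [Pi.sub_apply]
      ring
    have h2 := lap_diff_unique G hconn hmv i j
    simp only [Pi.sub_apply] at h2
    rw [hrij, ← h2]; ring
  -- entries of the Laplacian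
  have hL : ∀ i j, G.lapMatrix ℝ i j
      = (if i = j then (G.degree i : ℝ) else 0) - (if G.Adj i j then 1 else 0) := by
    intro i j
    simp [SimpleGraph.lapMatrix, SimpleGraph.degMatrix, Matrix.diagonal_apply]
  have hsym := G.isSymm_lapMatrix (R := ℝ)
  -- swap lemma for adjacency-weighted sums
  have hswap : ∀ g : V → V → ℝ,
      (∑ i, ∑ j, (if G.Adj i j then (1:ℝ) else 0) * g i j)
      = ∑ i, ∑ j, (if G.Adj i j then (1:ℝ) else 0) * g j i := by
    intro g
    rw [Finset.sum_comm]
    refine Finset.sum_congr rfl fun i _ => Finset.sum_congr rfl fun j _ => ?_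
    rw [if_congr (G.adj_comm j i) rfl rfl]
  have hdiag : ∀ j : V, (G.lapMatrix ℝ *ᵥ x j) j = 1 - 1 / (Fintype.card V : ℝ) := by
    intro j
    rw [hxs j]
    simp
  calc ∑ i, ∑ j, (if G.Adj i j then r i j else 0)
      = ∑ i, ∑ j, ((if G.Adj i j then (1:ℝ) else 0) * x i i
          + (if G.Adj i j then (1:ℝ) else 0) * x j j
          - ((if G.Adj i j then (1:ℝ) else 0) * x j i
          + (if G.Adj i j then (1:ℝ) else 0) * x i j)) := by
        refine Finset.sum_congr rfl fun i _ => Finset.sum_congr rfl fun j _ => ?_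
        by_cases h : G.Adj i j <;> simp [h, hrf i j] <;> ring
    _ = (∑ i, ∑ j, (if G.Adj i j then (1:ℝ) else 0) * x i i)
          + (∑ i, ∑ j, (if G.Adj i j then (1:ℝ) else 0) * x j j)
          - ((∑ i, ∑ j, (if G.Adj i j then (1:ℝ) else 0) * x j i)
          + (∑ i, ∑ j, (if G.Adj i j then (1:ℝ) else 0) * x i j)) := by
        simp only [Finset.sum_add_distrib, Finset.sum_sub_distrib]
    _ = 2 * ((∑ i, ∑ j, (if G.Adj i j then (1:ℝ) else 0) * x i i)
          - (∑ i, ∑ j, (if G.Adj i j then (1:ℝ) else 0) * x j i)) := by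
        rw [hswap (fun i j => x j j), hswap (fun i j => x i j)]
        ring
    _ = 2 * (∑ i, ∑ j, G.lapMatrix ℝ i j * x j i) := by
        congr 1
        rw [← Finset.sum_sub_distrib]
        refine Finset.sum_congr rfl fun i _ => ?_
        have h1 : (∑ j, (if G.Adj i j then (1:ℝ) else 0) * x i i)
            = (G.degree i : ℝ) * x i i := by
          rw [← Finset.sum_mul, ← SimpleGraph.degree_eq_sum_if_adj]
        have h2 : (∑ j, (if i = j then (G.degree i : ℝ) else 0) * x j i)
            = (G.degree i : ℝ) * x i i := by
          simp [ite_mul]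
        rw [h1, ← h2, ← Finset.sum_sub_distrib]
        refine Finset.sum_congr rfl fun j _ => ?_
        rw [hL i j]
        ring
    _ = 2 * (∑ j, (G.lapMatrix ℝ *ᵥ x j) j) := by
        congr 1
        rw [Finset.sum_comm]
        refine Finset.sum_congr rfl fun j _ => ?_
        simp only [Matrix.mulVec, dotProduct]
        refine Finset.sum_congr rfl fun i _ => ?_
        rw [hsym.apply j i]
    _ = 2 * ((Fintype.card V : ℝ) - 1) := by
        simp only [hdiag]
        rw [Finset.sum_const, Finset.card_univ, nsmul_eq_mul, mul_sub, mul_one,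
          mul_one_div, div_self hn0]
end

section
/- For any pair of nodes i and j in a simple connected graph G with m edges, 2m·r_{ij} = T_{ij} + T_{ji}, where T_{ij} is the expected hitting time of the simple random walk from i to j and r_{ij} is the effective resistance between i and j. -/
open Finset

variable {V : Type*}

lemma hitting_lap [Fintype V] [DecidableEq V] (G : SimpleGraph V) [DecidableRel G.Adj]
    (T : V → V → ℝ) (hT : IsHitting G T) (j : V)
    (hdeg : ∀ k, 0 < G.degree k) (k : V) :
    (G.lapMatrix ℝ).mulVec (fun k => T k j) k
      = (G.degree k : ℝ) - (if k = j then 2 * (G.edgeFinset.card : ℝ) else 0) := by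
  have hoff : ∀ k, k ≠ j → (G.lapMatrix ℝ).mulVec (fun k => T k j) k = (G.degree k : ℝ) := by
    intro k hk
    rw [SimpleGraph.lapMatrix_mulVec_apply]
    have hd : (G.degree k : ℝ) ≠ 0 := (Nat.cast_pos.mpr (hdeg k)).ne'
    rw [hT.2 k j hk]
    field_simp
    ring
  have hcol : ∀ l, ∑ k, G.lapMatrix ℝ k l = 0 := by
    intro l
    have h1 := congrFun (G.lapMatrix_mulVec_const_eq_zero (R := ℝ)) l
    simp only [Matrix.mulVec, dotProduct, mul_one, Pi.zero_apply] at h1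
    calc ∑ k, G.lapMatrix ℝ k l = ∑ k, G.lapMatrix ℝ l k := by
          refine Finset.sum_congr rfl fun k _ => ?_
          exact (G.isSymm_lapMatrix ℝ).apply l k
      _ = 0 := h1
  have hsum : ∑ k, (G.lapMatrix ℝ).mulVec (fun k => T k j) k = 0 := by
    simp only [Matrix.mulVec, dotProduct]
    rw [Finset.sum_comm]
    simp only [← Finset.sum_mul]
    simp [hcol]
  by_cases hkj : k = j
  · rw [if_pos hkj]
    rw [← Finset.add_sum_erase _ _ (Finset.mem_univ j)] at hsum
    have herase : ∑ l ∈ Finset.univ.erase j, (G.lapMatrix ℝ).mulVec (fun k => T k j) l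
        = ∑ l ∈ Finset.univ.erase j, (G.degree l : ℝ) :=
      Finset.sum_congr rfl fun l hl => hoff l (Finset.mem_erase.mp hl).1
    rw [herase] at hsum
    have h2 : ∑ v, G.degree v = 2 * G.edgeFinset.card := by
      convert G.sum_degrees_eq_twice_card_edges using 4
    have hdeg_sum : ∑ l, (G.degree l : ℝ) = 2 * (G.edgeFinset.card : ℝ) := by
      exact_mod_cast congrArg (Nat.cast (R := ℝ)) h2
    rw [← Finset.add_sum_erase _ (fun l => (G.degree l : ℝ)) (Finset.mem_univ j)] at hdeg_sum
    rw [hkj]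
    linarith
  · rw [hoff k hkj, if_neg hkj, sub_zero]

/-- `2m r_{ij} = T_{ij} + T_{ji}`. -/
theorem stmt4 [Fintype V] [DecidableEq V] (G : SimpleGraph V) [DecidableRel G.Adj]
    (hconn : G.Connected) (r : V → V → ℝ) (T : V → V → ℝ)
    (hr : IsEffRes G r) (hT : IsHitting G T) (i j : V) :
    2 * (G.edgeFinset.card : ℝ) * r i j = T i j + T j i := by
  obtain ⟨φ, hφ, hrij⟩ := hr i j
  by_cases hij : i = j
  · subst hij
    rw [hrij, hT.1 i, sub_self, mul_zero, add_zero]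
  · have hdeg : ∀ k, 0 < G.degree k := by
      intro k
      rw [G.degree_pos_iff_exists_adj]
      set x := if k = i then j else i with hx
      have hxk : k ≠ x := by
        rw [hx]; split
        · rename_i h; rw [h]; exact hij
        · rename_i h; exact h
      obtain ⟨w⟩ := hconn.preconnected k x
      exact ⟨_, w.adj_snd (SimpleGraph.Walk.not_nil_of_ne hxk)⟩
    have key : (G.lapMatrix ℝ).mulVec
        (fun k => (2 * (G.edgeFinset.card : ℝ)) * φ k - (T k j - T k i)) = 0 := by
      funext k
      have h1 : (fun k => (2 * (G.edgeFinset.card : ℝ)) * φ k - (T k j - T k i))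
          = (2 * (G.edgeFinset.card : ℝ)) • φ - ((fun k => T k j) - fun k => T k i) := rfl
      rw [h1, Matrix.mulVec_sub, Matrix.mulVec_sub, Matrix.mulVec_smul]
      have hF := hitting_lap G T hT j hdeg k
      have hG := hitting_lap G T hT i hdeg k
      have hφk := congrFun hφ k
      simp only [Pi.sub_apply, Pi.smul_apply, smul_eq_mul, hF, hG, hφk, Pi.zero_apply]
      by_cases hki : k = i <;> by_cases hkj : k = j
      · exact absurd (hki.symm.trans hkj) hij
      · simp only [if_pos hki, if_neg hkj]; ring
      · simp only [if_neg hki, if_pos hkj]; ring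
      · simp only [if_neg hki, if_neg hkj]; ring
    have hconst := (G.lapMatrix_mulVec_eq_zero_iff_forall_reachable
        (x := fun k => (2 * (G.edgeFinset.card : ℝ)) * φ k - (T k j - T k i))).mp
        (by exact key)
    have hij' := hconst i j (hconn.preconnected i j)
    rw [hT.1 i, hT.1 j] at hij'
    rw [hrij]
    linarith
end

section
/- Let G be a simple connected graph with n nodes and m edges, and let P be its normalized adjacency matrix with eigenvalues 1 = λ_1 > λ_2 ≥ ... ≥ λ_n. Then the multiplicative degree-Kirchhoff index of G, defined as (1/2)∑_{i,j} d_i d_j r_{ij}, equals 2m ∑_{k=2}^n 1/(1-λ_k). -/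
open Finset

variable {V : Type*}

section stmt5aux

open Matrix

variable [Fintype V] [DecidableEq V] (G : SimpleGraph V) [DecidableRel G.Adj]

private lemma aux_lap_entry (i j : V) :
    G.lapMatrix ℝ i j =
      Real.sqrt (G.degree i : ℝ) * (((1 : Matrix V V ℝ) - normAdj G) i j) *
        Real.sqrt (G.degree j : ℝ) := by
  have hdeg : ∀ a b : V, G.Adj a b → 0 < (G.degree a : ℝ) := by
    intro a b hab
    exact_mod_cast (G.degree_pos_iff_exists_adj a).mpr ⟨b, hab⟩
  simp only [SimpleGraph.lapMatrix, SimpleGraph.degMatrix, Matrix.sub_apply,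
    Matrix.diagonal_apply, SimpleGraph.adjMatrix_apply, Matrix.one_apply, normAdj,
    Matrix.of_apply]
  by_cases h : i = j
  · subst h
    simp [G.irrefl, Real.mul_self_sqrt (Nat.cast_nonneg _)]
  · rw [if_neg h, if_neg h]
    by_cases ha : G.Adj i j
    · have hi := hdeg i j ha
      have hj := hdeg j i (G.adj_symm ha)
      rw [if_pos ha, if_pos ha, Real.sqrt_mul (le_of_lt hi)]
      field_simp
      ring
    · simp [ha]

private lemma aux_lap_mulVec (z : V → ℝ) (i : V) :
    (G.lapMatrix ℝ *ᵥ z) i =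
      Real.sqrt (G.degree i : ℝ) *
        ((((1 : Matrix V V ℝ) - normAdj G) *ᵥ fun j => Real.sqrt (G.degree j : ℝ) * z j) i) := by
  simp only [Matrix.mulVec, dotProduct, Finset.mul_sum]
  refine Finset.sum_congr rfl fun j _ => ?_
  rw [aux_lap_entry]
  ring

private lemma aux_ker (hconn : G.Connected) (z : V → ℝ) (hz : G.lapMatrix ℝ *ᵥ z = 0)
    (a b : V) : z a = z b :=
  (G.lapMatrix_mulVec_eq_zero_iff_forall_reachable (x := z)).mp
    hz a b (hconn.preconnected a b)

private lemma aux_Pker (hconn : G.Connected) (hd : ∀ i, (0:ℝ) < (G.degree i : ℝ))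
    (v : V → ℝ) (hv : ∀ a, ∑ b, normAdj G a b * v b = v a) (a b : V) :
    v a / Real.sqrt (G.degree a : ℝ) = v b / Real.sqrt (G.degree b : ℝ) := by
  have hs : ∀ i, (0:ℝ) < Real.sqrt (G.degree i : ℝ) := fun i => Real.sqrt_pos.mpr (hd i)
  set z : V → ℝ := fun i => v i / Real.sqrt (G.degree i : ℝ) with hzdef
  have hsz : (fun j => Real.sqrt (G.degree j : ℝ) * z j) = v := by
    funext j
    rw [hzdef, mul_div_assoc', mul_comm, mul_div_assoc, div_self (ne_of_gt (hs j)), mul_one]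
  have h0 : G.lapMatrix ℝ *ᵥ z = 0 := by
    funext i
    rw [Pi.zero_apply, aux_lap_mulVec, hsz, Matrix.sub_mulVec, Matrix.one_mulVec]
    have : normAdj G *ᵥ v = v := by
      funext a
      exact hv a
    rw [this]
    simp
  exact aux_ker G hconn z h0 a b

private lemma aux_Ps (hd : ∀ i, (0:ℝ) < (G.degree i : ℝ)) (i : V) :
    ∑ j, normAdj G i j * Real.sqrt (G.degree j : ℝ) = Real.sqrt (G.degree i : ℝ) := by
  have hs : ∀ i, (0:ℝ) < Real.sqrt (G.degree i : ℝ) := fun i => Real.sqrt_pos.mpr (hd i)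
  simp only [normAdj, Matrix.of_apply, ite_mul, zero_mul]
  have hterm : ∀ j, (if G.Adj i j then 1 / Real.sqrt ((G.degree i : ℝ) * (G.degree j : ℝ))
      * Real.sqrt (G.degree j : ℝ) else 0)
      = (if G.Adj i j then 1 / Real.sqrt (G.degree i : ℝ) else 0) := by
    intro j
    by_cases h : G.Adj i j
    · rw [if_pos h, if_pos h, Real.sqrt_mul (le_of_lt (hd i))]
      have h1 := ne_of_gt (hs j)
      have h2 := ne_of_gt (hs i)
      field_simp
    · simp [h]
  rw [Finset.sum_congr rfl fun j _ => hterm j]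
  have : (∑ j : V, if G.Adj i j then 1 / Real.sqrt (G.degree i : ℝ) else 0)
      = ∑ j ∈ G.neighborFinset i, 1 / Real.sqrt (G.degree i : ℝ) := by
    rw [SimpleGraph.neighborFinset_eq_filter, Finset.sum_filter]
  rw [this, Finset.sum_const, ← SimpleGraph.degree, nsmul_eq_mul]
  rw [mul_one_div, eq_comm, eq_div_iff (ne_of_gt (hs i)),
    Real.mul_self_sqrt (le_of_lt (hd i))]

private lemma aux_symm (i j : V) : normAdj G i j = normAdj G j i := by
  simp only [normAdj, Matrix.of_apply]
  by_cases h : G.Adj i j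
  · rw [if_pos h, if_pos (G.adj_symm h), mul_comm]
  · rw [if_neg h, if_neg fun h' => h (G.adj_symm h')]

variable (hP : (normAdj G).IsHermitian)

private lemma aux_eig (k a : V) :
    ∑ j, normAdj G a j * hP.eigenvectorBasis k j
      = hP.eigenvalues k * hP.eigenvectorBasis k a := by
  have h := congrFun (hP.mulVec_eigenvectorBasis k) a
  simpa [Matrix.mulVec, dotProduct] using h

private lemma aux_norm (k : V) :
    ∑ i, (hP.eigenvectorBasis k i : ℝ) * hP.eigenvectorBasis k i = 1 := by
  have h1 := hP.eigenvectorBasis.orthonormal.1 k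
  have h2 : (inner ℝ (hP.eigenvectorBasis k) (hP.eigenvectorBasis k) : ℝ) = 1 := by
    rw [real_inner_self_eq_norm_sq, h1]; norm_num
  simpa only [PiLp.inner_apply, RCLike.inner_apply, conj_trivial, mul_comm] using h2

private lemma aux_comp (x : V → ℝ) (a : V) :
    ∑ k, (∑ i, (hP.eigenvectorBasis k i : ℝ) * x i) * hP.eigenvectorBasis k a = x a := by
  have h := hP.eigenvectorBasis.sum_repr (WithLp.toLp 2 x : EuclideanSpace ℝ V)
  have hrepr : ∀ k, hP.eigenvectorBasis.repr (WithLp.toLp 2 x : EuclideanSpace ℝ V) k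
      = ∑ i, (hP.eigenvectorBasis k i : ℝ) * x i := by
    intro k
    rw [hP.eigenvectorBasis.repr_apply_apply]
    simp [PiLp.inner_apply, RCLike.inner_apply, mul_comm]
  have happ : ((∑ k, hP.eigenvectorBasis.repr (WithLp.toLp 2 x : EuclideanSpace ℝ V) k
        • hP.eigenvectorBasis k : EuclideanSpace ℝ V)) a
      = ∑ k, hP.eigenvectorBasis.repr (WithLp.toLp 2 x : EuclideanSpace ℝ V) k * hP.eigenvectorBasis k a := by
    rw [show ((∑ k, hP.eigenvectorBasis.repr (WithLp.toLp 2 x : EuclideanSpace ℝ V) k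
        • hP.eigenvectorBasis k : EuclideanSpace ℝ V)) a
      = ∑ k, (hP.eigenvectorBasis.repr (WithLp.toLp 2 x : EuclideanSpace ℝ V) k
        • hP.eigenvectorBasis k : EuclideanSpace ℝ V) a from by rw [WithLp.ofLp_sum, Finset.sum_apply]]
    rfl
  calc ∑ k, (∑ i, (hP.eigenvectorBasis k i : ℝ) * x i) * hP.eigenvectorBasis k a
      = ∑ k, hP.eigenvectorBasis.repr (WithLp.toLp 2 x : EuclideanSpace ℝ V) k * hP.eigenvectorBasis k a := by
        simp_rw [hrepr]
    _ = x a := by rw [← happ, h]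

private lemma aux_orth (hd : ∀ i, (0:ℝ) < (G.degree i : ℝ))
    (k : V) (hk : hP.eigenvalues k ≠ 1) :
    ∑ i, Real.sqrt (G.degree i : ℝ) * hP.eigenvectorBasis k i = 0 := by
  set s : V → ℝ := fun i => Real.sqrt (G.degree i : ℝ) with hs
  have h1 : hP.eigenvalues k * (∑ i, s i * hP.eigenvectorBasis k i)
      = ∑ i, s i * hP.eigenvectorBasis k i := by
    calc hP.eigenvalues k * (∑ i, s i * hP.eigenvectorBasis k i)
        = ∑ i, s i * (hP.eigenvalues k * hP.eigenvectorBasis k i) := by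
          rw [Finset.mul_sum]; exact Finset.sum_congr rfl fun i _ => by ring
      _ = ∑ i, s i * ∑ j, normAdj G i j * hP.eigenvectorBasis k j := by
          simp_rw [aux_eig G hP]
      _ = ∑ j, (∑ i, normAdj G j i * s i) * hP.eigenvectorBasis k j := by
          simp_rw [Finset.mul_sum, Finset.sum_mul]
          rw [Finset.sum_comm]
          exact Finset.sum_congr rfl fun j _ => Finset.sum_congr rfl fun i _ => by
            rw [aux_symm G]; ring
      _ = ∑ j, s j * hP.eigenvectorBasis k j := by simp_rw [hs, aux_Ps G hd]
  have h2 : (hP.eigenvalues k - 1) * (∑ i, s i * hP.eigenvectorBasis k i) = 0 := by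
    rw [sub_mul, h1, one_mul, sub_self]
  exact (mul_eq_zero.mp h2).resolve_left (sub_ne_zero.mpr hk)

private lemma aux_r (hconn : G.Connected) (hd : ∀ i, (0:ℝ) < (G.degree i : ℝ))
    (r : V → V → ℝ) (hr : IsEffRes G r) (i j : V) :
    r i j = ∑ k, (if hP.eigenvalues k = 1 then 0 else 1 / (1 - hP.eigenvalues k)) *
      (hP.eigenvectorBasis k i / Real.sqrt (G.degree i : ℝ)
        - hP.eigenvectorBasis k j / Real.sqrt (G.degree j : ℝ))^2 := by
  classical
  set s : V → ℝ := fun a => Real.sqrt (G.degree a : ℝ) with hsdef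
  have hs0 : ∀ a, 0 < s a := fun a => Real.sqrt_pos.mpr (hd a)
  set lam : V → ℝ := hP.eigenvalues with hlam
  set u : V → V → ℝ := fun k a => hP.eigenvectorBasis k a with hu
  set g : V → ℝ := fun k => if lam k = 1 then 0 else 1 / (1 - lam k) with hg
  set Δ : V → ℝ := fun k => u k i / s i - u k j / s j with hΔ
  set x : V → ℝ := fun b => ((if b = i then (1:ℝ) else 0) - if b = j then 1 else 0) / s b
    with hx
  have hDx : ∀ k, ∑ b, u k b * x b = Δ k := by
    intro k
    have e1 : ∀ (c : Prop) [Decidable c] (y z : ℝ),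
        y * ((if c then (1:ℝ) else 0) / z) = if c then y / z else 0 := by
      intro c _ y z; split <;> simp [mul_one_div, div_eq_mul_inv]
    have : ∀ b, u k b * x b
        = (if b = i then u k b / s b else 0) - (if b = j then u k b / s b else 0) := by
      intro b
      rw [hx]
      simp only
      rw [sub_div, mul_sub, e1, e1]
    rw [Finset.sum_congr rfl fun b _ => this b, Finset.sum_sub_distrib,
      Finset.sum_ite_eq' univ i, Finset.sum_ite_eq' univ j]
    simp [hΔ]
  have hΔ1 : ∀ k, lam k = 1 → Δ k = 0 := by
    intro k hk
    have hv : ∀ a, ∑ b, normAdj G a b * u k b = u k a := by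
      intro a
      have h := aux_eig G hP k a
      rw [show hP.eigenvalues k = lam k from rfl, hk, one_mul] at h
      exact h
    have := aux_Pker G hconn hd (u k) hv i j
    simp only [hΔ, hsdef] at *
    rw [this, sub_self]
  set ψ : V → ℝ := fun a => ∑ k, g k * Δ k * (u k a / s a) with hψ
  have hlap : (G.lapMatrix ℝ) *ᵥ ψ
      = (fun a => (if a = i then (1:ℝ) else 0) - if a = j then 1 else 0) := by
    funext a
    rw [aux_lap_mulVec]
    have hv : (fun b => s b * ψ b) = fun b => ∑ k, g k * Δ k * u k b := by
      funext b
      rw [hψ]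
      simp only
      rw [Finset.mul_sum]
      refine Finset.sum_congr rfl fun k _ => ?_
      have hc : u k b / s b * s b = u k b := div_mul_cancel₀ _ (ne_of_gt (hs0 b))
      calc s b * (g k * Δ k * (u k b / s b)) = g k * Δ k * (u k b / s b * s b) := by ring
        _ = g k * Δ k * u k b := by rw [hc]
    rw [hv]
    have hmv : (((1 : Matrix V V ℝ) - normAdj G) *ᵥ fun b => ∑ k, g k * Δ k * u k b) a
        = ∑ k, g k * Δ k * ((1 - lam k) * u k a) := by
      rw [Matrix.sub_mulVec, Matrix.one_mulVec, Pi.sub_apply]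
      have hP1 : (normAdj G *ᵥ fun b => ∑ k, g k * Δ k * u k b) a
          = ∑ k, g k * Δ k * (lam k * u k a) := by
        simp only [Matrix.mulVec, dotProduct]
        calc ∑ b, normAdj G a b * ∑ k, g k * Δ k * u k b
            = ∑ b, ∑ k, g k * Δ k * (normAdj G a b * u k b) := by
              refine Finset.sum_congr rfl fun b _ => ?_
              rw [Finset.mul_sum]
              exact Finset.sum_congr rfl fun k _ => by ring
          _ = ∑ k, ∑ b, g k * Δ k * (normAdj G a b * u k b) := Finset.sum_comm
          _ = ∑ k, g k * Δ k * (lam k * u k a) := Finset.sum_congr rfl fun k _ => by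
              rw [← Finset.mul_sum]
              exact congrArg (fun t => g k * Δ k * t) (aux_eig G hP k a)
      rw [hP1]
      rw [← Finset.sum_sub_distrib]
      refine Finset.sum_congr rfl fun k _ => by ring
    rw [hmv]
    have hstep : ∑ k, g k * Δ k * ((1 - lam k) * u k a) = ∑ k, Δ k * u k a := by
      refine Finset.sum_congr rfl fun k _ => ?_
      by_cases hk : lam k = 1
      · rw [hΔ1 k hk, hg]
        simp [hk]
      · have h1 : g k * (1 - lam k) = 1 := by
          rw [hg]
          simp only [if_neg hk]
          rw [one_div, inv_mul_cancel₀ (sub_ne_zero.mpr (fun h => hk h.symm))]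
        calc g k * Δ k * ((1 - lam k) * u k a) = g k * (1 - lam k) * (Δ k * u k a) := by ring
          _ = Δ k * u k a := by rw [h1, one_mul]
    rw [hstep]
    have hcomp : ∑ k, Δ k * u k a = x a := by
      have h := aux_comp G hP x a
      calc ∑ k, Δ k * u k a = ∑ k, (∑ b, (hP.eigenvectorBasis k b : ℝ) * x b)
            * hP.eigenvectorBasis k a := by
            refine Finset.sum_congr rfl fun k _ => ?_
            rw [← hDx k]
        _ = x a := h
    rw [hcomp, hx]
    simp only
    rw [mul_div_cancel₀ _ (ne_of_gt (hs0 a))]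
  obtain ⟨φ, hφ, hrij⟩ := hr i j
  have hz : G.lapMatrix ℝ *ᵥ (φ - ψ) = 0 := by
    rw [Matrix.mulVec_sub, hφ, hlap, sub_self]
  have hconst := aux_ker G hconn (φ - ψ) hz i j
  have hij : φ i - φ j = ψ i - ψ j := by
    have : φ i - ψ i = φ j - ψ j := hconst
    linarith
  rw [hrij, hij, hψ]
  simp only
  rw [← Finset.sum_sub_distrib]
  refine Finset.sum_congr rfl fun k _ => ?_
  rw [show (hP.eigenvectorBasis k i : ℝ) / Real.sqrt (G.degree i : ℝ)
      - hP.eigenvectorBasis k j / Real.sqrt (G.degree j : ℝ) = Δ k from rfl]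
  rw [show (if hP.eigenvalues k = 1 then (0:ℝ) else 1 / (1 - hP.eigenvalues k)) = g k from rfl]
  calc g k * Δ k * (u k i / s i) - g k * Δ k * (u k j / s j)
      = g k * Δ k * (u k i / s i - u k j / s j) := by ring
    _ = g k * Δ k ^ 2 := by rw [show u k i / s i - u k j / s j = Δ k from rfl]; ring

end stmt5aux

/-- the multiplicative degree-Kirchhoff index equals `2m ∑_{k=2}^n 1/(1-λ_k)`. -/
theorem stmt5 [Fintype V] [DecidableEq V] (G : SimpleGraph V) [DecidableRel G.Adj]
    (hconn : G.Connected) (r : V → V → ℝ) (hr : IsEffRes G r) :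
    mulKirchhoff G r =
      2 * (G.edgeFinset.card : ℝ) *
        ∑ i, if (normAdj_isHermitian G).eigenvalues i = 1 then 0
             else 1 / (1 - (normAdj_isHermitian G).eigenvalues i) := by
  classical
  by_cases hadj : ∃ a b, G.Adj a b
  case neg =>
    push_neg at hadj
    have hdeg : ∀ v : V, G.degree v = 0 := by
      intro v
      by_contra h
      obtain ⟨w, hw⟩ := (G.degree_pos_iff_exists_adj v).mp (Nat.pos_of_ne_zero h)
      exact hadj v w hw
    have hE : G.edgeFinset = ∅ := by
      rw [Finset.eq_empty_iff_forall_notMem]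
      intro e he
      induction e with
      | _ a b => exact hadj a b (SimpleGraph.mem_edgeFinset.mp he)
    simp [mulKirchhoff, hE, hdeg]
  case pos =>
  obtain ⟨a0, b0, hab⟩ := hadj
  have hdpos : ∀ v : V, 0 < G.degree v := by
    intro v
    rw [SimpleGraph.degree_pos_iff_exists_adj]
    obtain ⟨w⟩ := hconn.preconnected v a0
    cases w with
    | nil => exact ⟨b0, hab⟩
    | cons h p => exact ⟨_, h⟩
  have hd : ∀ i : V, (0:ℝ) < (G.degree i : ℝ) := fun i => by exact_mod_cast hdpos i
  set hP := normAdj_isHermitian G with hPdef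
  set s : V → ℝ := fun a => Real.sqrt (G.degree a : ℝ) with hsdef
  have hs0 : ∀ a, 0 < s a := fun a => Real.sqrt_pos.mpr (hd a)
  have hss : ∀ a, s a * s a = (G.degree a : ℝ) := fun a => Real.mul_self_sqrt (le_of_lt (hd a))
  set u : V → V → ℝ := fun k a => hP.eigenvectorBasis k a with hu
  set lam : V → ℝ := hP.eigenvalues with hlam
  set g : V → ℝ := fun k => if lam k = 1 then 0 else 1 / (1 - lam k) with hg
  have hMval : (∑ a, (G.degree a : ℝ)) = 2 * (G.edgeFinset.card : ℝ) := by
    have h := SimpleGraph.sum_degrees_eq_twice_card_edges G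
    have h2 : (∑ v, G.degree v) = 2 * G.edgeFinset.card := by
      rw [Subsingleton.elim G.fintypeEdgeSet (by infer_instance : Fintype G.edgeSet)] at h
      exact h
    exact_mod_cast congrArg (Nat.cast : ℕ → ℝ) h2
  -- the resistance formula
  have hrfor : ∀ i j : V, r i j = ∑ k, g k * (u k i / s i - u k j / s j)^2 :=
    fun i j => aux_r G hP hconn hd r hr i j
  -- termwise expansion
  have hterm : ∀ (k i j : V), (G.degree i : ℝ) * (G.degree j : ℝ) * (u k i / s i - u k j / s j)^2
      = (u k i * u k i) * (G.degree j : ℝ) - (2 * (s i * u k i)) * (s j * u k j)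
        + (G.degree i : ℝ) * (u k j * u k j) := by
    intro k i j
    rw [← hss i, ← hss j]
    have h1 := ne_of_gt (hs0 i)
    have h2 := ne_of_gt (hs0 j)
    field_simp
    ring
  have hnorm1 : ∀ k, ∑ a, u k a * u k a = 1 := fun k => aux_norm G hP k
  -- the double sum for fixed k
  have hdouble : ∀ k, ∑ i, ∑ j, (G.degree i : ℝ) * (G.degree j : ℝ)
      * (u k i / s i - u k j / s j)^2
      = 2 * (∑ a, (G.degree a : ℝ))
        - 2 * ((∑ a, s a * u k a) * (∑ a, s a * u k a)) := by
    intro k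
    have hinner : ∀ i, ∑ j, ((u k i * u k i) * (G.degree j : ℝ)
        - (2 * (s i * u k i)) * (s j * u k j) + (G.degree i : ℝ) * (u k j * u k j))
        = (u k i * u k i) * (∑ a, (G.degree a : ℝ))
          - (2 * (s i * u k i)) * (∑ a, s a * u k a) + (G.degree i : ℝ) * 1 := by
      intro i
      rw [Finset.sum_add_distrib, Finset.sum_sub_distrib, ← Finset.mul_sum,
        ← Finset.mul_sum, ← Finset.mul_sum, hnorm1 k]
    calc ∑ i, ∑ j, (G.degree i : ℝ) * (G.degree j : ℝ) * (u k i / s i - u k j / s j)^2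
        = ∑ i, ∑ j, ((u k i * u k i) * (G.degree j : ℝ)
            - (2 * (s i * u k i)) * (s j * u k j) + (G.degree i : ℝ) * (u k j * u k j)) :=
          Finset.sum_congr rfl fun i _ => Finset.sum_congr rfl fun j _ => hterm k i j
      _ = ∑ i, ((u k i * u k i) * (∑ a, (G.degree a : ℝ))
            - (2 * (s i * u k i)) * (∑ a, s a * u k a) + (G.degree i : ℝ) * 1) :=
          Finset.sum_congr rfl fun i _ => hinner i
      _ = (∑ i, u k i * u k i) * (∑ a, (G.degree a : ℝ))
            - 2 * ((∑ i, s i * u k i) * (∑ a, s a * u k a))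
            + (∑ i, (G.degree i : ℝ) * 1) := by
          rw [Finset.sum_add_distrib, Finset.sum_sub_distrib, ← Finset.sum_mul]
          congr 1
          rw [show ∀ (x y : ℝ), 2 * (x * y) = (2 * x) * y from fun x y => by ring,
            ← Finset.sum_mul, ← Finset.mul_sum]
      _ = 2 * (∑ a, (G.degree a : ℝ))
            - 2 * ((∑ a, s a * u k a) * (∑ a, s a * u k a)) := by
          rw [hnorm1 k]
          simp only [mul_one]
          ring
  -- the key per-k identity
  have hkey : ∀ k, g k * (2 * (∑ a, (G.degree a : ℝ))
      - 2 * ((∑ a, s a * u k a) * (∑ a, s a * u k a)))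
      = 2 * (∑ a, (G.degree a : ℝ)) * g k := by
    intro k
    by_cases hk : lam k = 1
    · rw [hg]
      simp [hk]
    · have hTk : (∑ a, s a * u k a) = 0 := aux_orth G hP hd k hk
      rw [hTk]
      ring
  -- put it together
  rw [mulKirchhoff]
  have hsum : ∑ i, ∑ j, (G.degree i : ℝ) * (G.degree j : ℝ) * r i j
      = 2 * (∑ a, (G.degree a : ℝ)) * ∑ k, g k := by
    calc ∑ i, ∑ j, (G.degree i : ℝ) * (G.degree j : ℝ) * r i j
        = ∑ i, ∑ j, ∑ k, g k * ((G.degree i : ℝ) * (G.degree j : ℝ)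
            * (u k i / s i - u k j / s j)^2) := by
          refine Finset.sum_congr rfl fun i _ => Finset.sum_congr rfl fun j _ => ?_
          rw [hrfor i j, Finset.mul_sum]
          exact Finset.sum_congr rfl fun k _ => by ring
      _ = ∑ i, ∑ k, ∑ j, g k * ((G.degree i : ℝ) * (G.degree j : ℝ)
            * (u k i / s i - u k j / s j)^2) :=
          Finset.sum_congr rfl fun i _ => Finset.sum_comm
      _ = ∑ k, ∑ i, ∑ j, g k * ((G.degree i : ℝ) * (G.degree j : ℝ)
            * (u k i / s i - u k j / s j)^2) := Finset.sum_comm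
      _ = ∑ k, g k * (2 * (∑ a, (G.degree a : ℝ))
            - 2 * ((∑ a, s a * u k a) * (∑ a, s a * u k a))) := by
          refine Finset.sum_congr rfl fun k _ => ?_
          rw [← hdouble k, Finset.mul_sum]
          exact Finset.sum_congr rfl fun i _ => (Finset.mul_sum _ _ _).symm
      _ = ∑ k, 2 * (∑ a, (G.degree a : ℝ)) * g k := Finset.sum_congr rfl fun k _ => hkey k
      _ = 2 * (∑ a, (G.degree a : ℝ)) * ∑ k, g k := (Finset.mul_sum _ _ _).symm
  rw [hsum, hMval]
  have hfin : ∑ k, g k = ∑ i, if (normAdj_isHermitian G).eigenvalues i = 1 then (0:ℝ)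
      else 1 / (1 - (normAdj_isHermitian G).eigenvalues i) := rfl
  rw [hfin]
  ring
end

section
/- Let S_q(G) be the q-subdivision graph of a simple connected graph G (obtained by replacing each edge uv of G with q internally disjoint paths of length 2). If λ̂ is a nonzero eigenvalue of the normalized adjacency matrix P̂ of S_q(G), then 2λ̂² - 1 is an eigenvalue of the normalized adjacency matrix P of G, and the multiplicity of λ̂ for P̂ equals the multiplicity of 2λ̂² - 1 for P. -/
open Finset

variable {V : Type*}

section Aux

variable [Fintype V] [DecidableEq V] (G : SimpleGraph V) [DecidableRel G.Adj] (q : ℕ)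

@[simp] lemma qSub_adj_inl_inl (u v : V) :
    (qSubdivision G q).Adj (Sum.inl u) (Sum.inl v) ↔ False := Iff.rfl

@[simp] lemma qSub_adj_inr_inr (p p' : G.edgeSet × Fin q) :
    (qSubdivision G q).Adj (Sum.inr p) (Sum.inr p') ↔ False := Iff.rfl

@[simp] lemma qSub_adj_inl_inr (u : V) (p : G.edgeSet × Fin q) :
    (qSubdivision G q).Adj (Sum.inl u) (Sum.inr p) ↔ u ∈ (p.1 : Sym2 V) := Iff.rfl

@[simp] lemma qSub_adj_inr_inl (u : V) (p : G.edgeSet × Fin q) :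
    (qSubdivision G q).Adj (Sum.inr p) (Sum.inl u) ↔ u ∈ (p.1 : Sym2 V) := Iff.rfl

lemma edgeSum {M : Type*} [AddCommMonoid M] (f : Sym2 V → M) :
    ∑ e : G.edgeSet, f e = ∑ e ∈ G.edgeFinset, f e :=
  (Finset.sum_subtype G.edgeFinset (fun _ => SimpleGraph.mem_edgeFinset) f).symm

lemma count_incidence (u : V) :
    ∑ e : G.edgeSet, (if u ∈ (e : Sym2 V) then (1 : ℕ) else 0) = G.degree u := by
  rw [edgeSum G (fun z => if u ∈ z then (1:ℕ) else 0), ← Finset.card_filter,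
    ← SimpleGraph.incidenceFinset_eq_filter, SimpleGraph.card_incidenceFinset_eq_degree]

lemma endpoints_two (e : G.edgeSet) :
    ∑ v : V, (if v ∈ (e : Sym2 V) then (1 : ℕ) else 0) = 2 := by
  obtain ⟨e, he⟩ := e
  induction e with
  | _ a b =>
    have hab : a ≠ b := G.ne_of_adj ((SimpleGraph.mem_edgeSet G).mp he)
    have hfil : (Finset.univ.filter (fun v : V => v ∈ s(a, b))) = {a, b} := by
      ext v; simp [Sym2.mem_iff]
    rw [← Finset.card_filter, hfil, Finset.card_insert_of_notMem (by simp [hab]),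
      Finset.card_singleton]

lemma deg_inl (u : V) :
    (qSubdivision G q).degree (Sum.inl u) = q * G.degree u := by
  rw [← SimpleGraph.card_neighborFinset_eq_degree, SimpleGraph.neighborFinset_eq_filter,
    Finset.card_filter, Fintype.sum_sum_type]
  simp only [qSub_adj_inl_inl, qSub_adj_inl_inr, if_false, Finset.sum_const_zero, zero_add]
  rw [Fintype.sum_prod_type]
  have : ∀ e : G.edgeSet, (∑ _i : Fin q, if u ∈ (e : Sym2 V) then (1:ℕ) else 0)
      = q * (if u ∈ (e : Sym2 V) then (1:ℕ) else 0) := by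
    intro e; rw [Finset.sum_const, Finset.card_univ, Fintype.card_fin, smul_eq_mul]
  rw [Finset.sum_congr rfl fun e _ => this e, ← Finset.mul_sum, count_incidence]

lemma deg_inr (p : G.edgeSet × Fin q) :
    (qSubdivision G q).degree (Sum.inr p) = 2 := by
  rw [← SimpleGraph.card_neighborFinset_eq_degree, SimpleGraph.neighborFinset_eq_filter,
    Finset.card_filter, Fintype.sum_sum_type]
  simp only [qSub_adj_inr_inr, qSub_adj_inr_inl, if_false, Finset.sum_const_zero, add_zero]
  exact endpoints_two G p.1

/-- `√(q·deg(u)·2)`, the square root of the degree of `u` in `S_q(G)` times that of a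
subdivision vertex. -/
noncomputable def DD (u : V) : ℝ :=
  Real.sqrt (((q * G.degree u : ℕ) : ℝ) * ((2 : ℕ) : ℝ))

lemma DD_mul_self (u : V) : DD G q u * DD G q u = 2 * q * G.degree u := by
  rw [DD, Real.mul_self_sqrt (by positivity)]
  push_cast; ring

lemma DD_pos (hq : 0 < q) (hu : 0 < G.degree u) : 0 < DD G q u := by
  apply Real.sqrt_pos.mpr
  have : 0 < q * G.degree u := Nat.mul_pos hq hu
  positivity

lemma DD_mul_DD (u v : V) :
    DD G q u * DD G q v = 2 * q * Real.sqrt ((G.degree u : ℝ) * (G.degree v : ℝ)) := by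
  rw [DD, DD, ← Real.sqrt_mul (by positivity)]
  rw [show (((q * G.degree u : ℕ) : ℝ) * ((2 : ℕ) : ℝ)) * (((q * G.degree v : ℕ) : ℝ) * ((2 : ℕ) : ℝ))
      = (2 * q) ^ 2 * ((G.degree u : ℝ) * (G.degree v : ℝ)) by push_cast; ring]
  rw [Real.sqrt_mul (by positivity), Real.sqrt_sq (by positivity)]

lemma DD_nonneg (u : V) : 0 ≤ DD G q u := Real.sqrt_nonneg _

lemma mulVec_inl (f : V ⊕ (G.edgeSet × Fin q) → ℝ) (u : V) :
    (normAdj (qSubdivision G q)).mulVec f (Sum.inl u)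
      = ∑ p : G.edgeSet × Fin q,
          (if u ∈ (p.1 : Sym2 V) then 1 / DD G q u * f (Sum.inr p) else 0) := by
  simp only [Matrix.mulVec, dotProduct, normAdj, Matrix.of_apply]
  rw [Fintype.sum_sum_type]
  simp only [qSub_adj_inl_inl, qSub_adj_inl_inr, if_false, zero_mul, Finset.sum_const_zero,
    zero_add]
  refine Finset.sum_congr rfl fun p _ => ?_
  rw [deg_inl, deg_inr, ite_mul, zero_mul, DD]

lemma mulVec_inr (f : V ⊕ (G.edgeSet × Fin q) → ℝ) (p : G.edgeSet × Fin q) :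
    (normAdj (qSubdivision G q)).mulVec f (Sum.inr p)
      = ∑ v : V, (if v ∈ (p.1 : Sym2 V) then 1 / DD G q v * f (Sum.inl v) else 0) := by
  simp only [Matrix.mulVec, dotProduct, normAdj, Matrix.of_apply]
  rw [Fintype.sum_sum_type]
  simp only [qSub_adj_inr_inr, qSub_adj_inr_inl, if_false, zero_mul, Finset.sum_const_zero,
    add_zero]
  refine Finset.sum_congr rfl fun v _ => ?_
  rw [deg_inl, deg_inr, ite_mul, zero_mul, DD, mul_comm (((2:ℕ):ℝ)) _]

lemma count_both (u v : V) :
    ∑ e : G.edgeSet, (if u ∈ (e : Sym2 V) then (if v ∈ (e : Sym2 V) then (1:ℝ) else 0) else 0)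
      = (if v = u then (G.degree u : ℝ) else 0) + (if G.Adj u v then 1 else 0) := by
  by_cases hvu : v = u
  · subst hvu
    simp only [if_pos rfl, SimpleGraph.irrefl, if_false, add_zero]
    have : ∀ e : G.edgeSet, (if v ∈ (e : Sym2 V) then (if v ∈ (e : Sym2 V) then (1:ℝ) else 0)
        else 0) = if v ∈ (e : Sym2 V) then (1:ℝ) else 0 := by
      intro e; by_cases h : v ∈ (e : Sym2 V) <;> simp [h]
    rw [Finset.sum_congr rfl fun e _ => this e]
    have := count_incidence G v
    calc ∑ e : G.edgeSet, (if v ∈ (e : Sym2 V) then (1:ℝ) else 0)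
        = ((∑ e : G.edgeSet, if v ∈ (e : Sym2 V) then (1:ℕ) else 0 : ℕ) : ℝ) := by
          push_cast; exact Finset.sum_congr rfl fun e _ => by split <;> simp
      _ = (G.degree v : ℝ) := by rw [this]
  · rw [if_neg hvu, zero_add]
    have : ∀ e : G.edgeSet, (if u ∈ (e : Sym2 V) then (if v ∈ (e : Sym2 V) then (1:ℝ) else 0)
        else 0) = if (e : Sym2 V) = s(u, v) then (1:ℝ) else 0 := by
      intro e
      rw [← ite_and]
      simp only [Sym2.mem_and_mem_iff (show u ≠ v from fun h => hvu h.symm)]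
    rw [Finset.sum_congr rfl fun e _ => this e,
      edgeSum G (fun z => if z = s(u, v) then (1:ℝ) else 0),
      Finset.sum_ite_eq' G.edgeFinset (s(u, v)) (fun _ => (1:ℝ))]
    simp [SimpleGraph.mem_edgeFinset, SimpleGraph.mem_edgeSet]

lemma key_sum (hq : 0 < q) (hdeg : ∀ v, 0 < G.degree v) (f : V → ℝ) (u : V) :
    ∑ e : G.edgeSet, (if u ∈ (e : Sym2 V) then
        (∑ v : V, if v ∈ (e : Sym2 V) then 1 / DD G q v * f v else 0) else 0)
      = DD G q u / (2 * q) * (f u + (normAdj G).mulVec f u) := by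
  have hq' : (0:ℝ) < q := by exact_mod_cast hq
  have hDDu : 0 < DD G q u := DD_pos G q hq (hdeg u)
  have h1 : ∀ e : G.edgeSet, (if u ∈ (e : Sym2 V) then
      (∑ v : V, if v ∈ (e : Sym2 V) then 1 / DD G q v * f v else 0) else 0)
      = ∑ v : V, (if u ∈ (e : Sym2 V) then (if v ∈ (e : Sym2 V) then (1:ℝ) else 0) else 0)
          * (1 / DD G q v * f v) := by
    intro e
    by_cases h : u ∈ (e : Sym2 V) <;> simp [h, ite_mul]
  rw [Finset.sum_congr rfl fun e _ => h1 e, Finset.sum_comm]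
  have h2 : ∀ v : V, (∑ e : G.edgeSet, (if u ∈ (e : Sym2 V) then
        (if v ∈ (e : Sym2 V) then (1:ℝ) else 0) else 0) * (1 / DD G q v * f v))
      = ((if v = u then (G.degree u : ℝ) else 0) + (if G.Adj u v then 1 else 0))
          * (1 / DD G q v * f v) := by
    intro v
    rw [← Finset.sum_mul, count_both]
  rw [Finset.sum_congr rfl fun v _ => h2 v]
  simp only [add_mul, Finset.sum_add_distrib]
  have hkey : (G.degree u : ℝ) * (1 / DD G q u) = DD G q u / (2 * q) := by
    rw [mul_one_div, div_eq_div_iff hDDu.ne' (by positivity), DD_mul_self]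
    push_cast
    ring
  have h3 : (∑ v : V, (if v = u then (G.degree u : ℝ) else 0) * (1 / DD G q v * f v))
      = DD G q u / (2 * q) * f u := by
    rw [Finset.sum_congr rfl (fun v _ => by rw [ite_mul, zero_mul]),
      Finset.sum_ite_eq' Finset.univ u (fun v => (G.degree u : ℝ) * (1 / DD G q v * f v)),
      if_pos (Finset.mem_univ u), ← mul_assoc, hkey]
  have h4 : (∑ v : V, (if G.Adj u v then (1:ℝ) else 0) * (1 / DD G q v * f v))
      = DD G q u / (2 * q) * (normAdj G).mulVec f u := by
    have hmv : (normAdj G).mulVec f u = ∑ v : V,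
        (if G.Adj u v then 1 / Real.sqrt ((G.degree u : ℝ) * (G.degree v : ℝ)) else 0) * f v := by
      simp [Matrix.mulVec, dotProduct, normAdj]
    rw [hmv, Finset.mul_sum]
    refine Finset.sum_congr rfl fun v _ => ?_
    by_cases hA : G.Adj u v
    · have hdv : 0 < DD G q v := DD_pos G q hq (hdeg v)
      have hdu' : (0:ℝ) < G.degree u := by exact_mod_cast hdeg u
      have hdv' : (0:ℝ) < G.degree v := by exact_mod_cast hdeg v
      have hs : (0:ℝ) < Real.sqrt ((G.degree u : ℝ) * (G.degree v : ℝ)) :=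
        Real.sqrt_pos.mpr (by positivity)
      have harith : 1 / DD G q v
          = DD G q u / (2 * q) * (1 / Real.sqrt ((G.degree u : ℝ) * (G.degree v : ℝ))) := by
        rw [div_mul_div_comm, div_eq_div_iff hdv.ne' (by positivity), one_mul]
        linear_combination - DD_mul_DD G q u v
      rw [if_pos hA, if_pos hA, one_mul, harith]
      field_simp
    · simp [hA]
  rw [h3, h4]
  ring

/-- Extension of a function on `V` to a function on the subdivision graph, suitable for
eigenvector lifting. -/
noncomputable def psi (lam : ℝ) (f : V → ℝ) : (V ⊕ (G.edgeSet × Fin q)) → ℝ :=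
  Sum.elim f fun p => 1 / lam * ∑ v : V, if v ∈ (p.1 : Sym2 V) then 1 / DD G q v * f v else 0

lemma psi_mulVec_inl (hq : 0 < q) (hdeg : ∀ v, 0 < G.degree v) (lam : ℝ) (f : V → ℝ) (u : V) :
    (normAdj (qSubdivision G q)).mulVec (psi G q lam f) (Sum.inl u)
      = 1 / lam * ((f u + (normAdj G).mulVec f u) / 2) := by
  have hq' : (0:ℝ) < q := by exact_mod_cast hq
  have hDDu : 0 < DD G q u := DD_pos G q hq (hdeg u)
  rw [mulVec_inl, Fintype.sum_prod_type]
  simp only [psi, Sum.elim_inr]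
  have h1 : ∀ e : G.edgeSet,
      (∑ _i : Fin q, if u ∈ (e : Sym2 V) then
          1 / DD G q u * (1 / lam * ∑ v : V, if v ∈ (e : Sym2 V) then 1 / DD G q v * f v else 0)
        else 0)
      = (q : ℝ) * (1 / DD G q u * (1 / lam)) *
          (if u ∈ (e : Sym2 V) then
            (∑ v : V, if v ∈ (e : Sym2 V) then 1 / DD G q v * f v else 0) else 0) := by
    intro e
    rw [Finset.sum_const, Finset.card_univ, Fintype.card_fin, nsmul_eq_mul]
    split <;> ring
  rw [Finset.sum_congr rfl fun e _ => h1 e, ← Finset.mul_sum, key_sum G q hq hdeg]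
  rw [show ((q:ℝ) * (1 / DD G q u * (1 / lam))
        * (DD G q u / (2 * q) * (f u + (normAdj G).mulVec f u)))
      = (DD G q u * (DD G q u)⁻¹) * ((q:ℝ) * ((q:ℝ))⁻¹)
        * (1 / lam * ((f u + (normAdj G).mulVec f u) / 2)) by ring,
    mul_inv_cancel₀ hDDu.ne', mul_inv_cancel₀ hq'.ne', one_mul, one_mul]

lemma psi_mulVec_inr (lam : ℝ) (f : V → ℝ) (p : G.edgeSet × Fin q) :
    (normAdj (qSubdivision G q)).mulVec (psi G q lam f) (Sum.inr p)
      = ∑ v : V, if v ∈ (p.1 : Sym2 V) then 1 / DD G q v * f v else 0 := by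
  rw [mulVec_inr]
  simp only [psi, Sum.elim_inl]

lemma dirA (hq : 0 < q) (hdeg : ∀ v, 0 < G.degree v) {lam : ℝ} (hlam : lam ≠ 0) (f : V → ℝ)
    (hf : (normAdj G).mulVec f = (2 * lam ^ 2 - 1) • f) :
    (normAdj (qSubdivision G q)).mulVec (psi G q lam f) = lam • psi G q lam f := by
  funext w
  cases w with
  | inl u =>
    rw [psi_mulVec_inl G q hq hdeg lam f u]
    have hfu : (normAdj G).mulVec f u = (2 * lam ^ 2 - 1) * f u := by
      rw [hf]; simp
    rw [hfu]
    simp only [Pi.smul_apply, psi, Sum.elim_inl, smul_eq_mul]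
    field_simp
    ring
  | inr p =>
    rw [psi_mulVec_inr]
    simp only [Pi.smul_apply, psi, Sum.elim_inr, smul_eq_mul]
    field_simp

lemma dirB1 {lam : ℝ} (hlam : lam ≠ 0) (g : V ⊕ (G.edgeSet × Fin q) → ℝ)
    (heig : (normAdj (qSubdivision G q)).mulVec g = lam • g) :
    g = psi G q lam (g ∘ Sum.inl) := by
  funext w
  cases w with
  | inl u => rfl
  | inr p =>
    have h1 := congrFun heig (Sum.inr p)
    rw [mulVec_inr] at h1
    simp only [Pi.smul_apply, smul_eq_mul] at h1
    simp only [psi, Sum.elim_inr, Function.comp]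
    rw [h1]
    field_simp

lemma dirB2 (hq : 0 < q) (hdeg : ∀ v, 0 < G.degree v) {lam : ℝ} (hlam : lam ≠ 0)
    (g : V ⊕ (G.edgeSet × Fin q) → ℝ)
    (heig : (normAdj (qSubdivision G q)).mulVec g = lam • g) :
    (normAdj G).mulVec (g ∘ Sum.inl) = (2 * lam ^ 2 - 1) • (g ∘ Sum.inl) := by
  funext u
  have h1 := congrFun heig (Sum.inl u)
  rw [dirB1 G q hlam g heig] at h1
  rw [psi_mulVec_inl G q hq hdeg lam (g ∘ Sum.inl) u] at h1
  simp only [Pi.smul_apply, psi, Sum.elim_inl, smul_eq_mul, Function.comp_apply] at h1 ⊢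
  have h2 : g (Sum.inl u) + (normAdj G).mulVec (g ∘ Sum.inl) u
      = lam * g (Sum.inl u) * (2 * lam) := by
    field_simp at h1
    linear_combination h1
  have h3 : (normAdj G).mulVec (g ∘ Sum.inl) u = (normAdj G).mulVec (g ∘ Sum.inl) u := rfl
  linear_combination h2

lemma psi_zero (lam : ℝ) : psi G q lam (0 : V → ℝ) = 0 := by
  funext w
  cases w <;> simp [psi]

/-- Linear map version of `psi`. -/
noncomputable def psiL (lam : ℝ) : (V → ℝ) →ₗ[ℝ] (V ⊕ (G.edgeSet × Fin q) → ℝ) where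
  toFun := psi G q lam
  map_add' f g := by
    funext w
    cases w with
    | inl u => rfl
    | inr p =>
      simp only [psi, Sum.elim_inr, Pi.add_apply, Sum.elim_inr]
      rw [← mul_add, ← Finset.sum_add_distrib]
      congr 1
      refine Finset.sum_congr rfl fun v _ => ?_
      split <;> ring
  map_smul' c f := by
    funext w
    cases w with
    | inl u => rfl
    | inr p =>
      simp only [psi, Sum.elim_inr, Pi.smul_apply, smul_eq_mul, RingHom.id_apply]
      rw [show (∑ v : V, if v ∈ (p.1 : Sym2 V) then 1 / DD G q v * (c * f v) else 0)
          = c * ∑ v : V, if v ∈ (p.1 : Sym2 V) then 1 / DD G q v * f v else 0 by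
        rw [Finset.mul_sum]
        refine Finset.sum_congr rfl fun v _ => ?_
        split <;> ring]
      ring

lemma ker_mem_iff {W : Type*} [Fintype W] [DecidableEq W] (M : Matrix W W ℝ) (c : ℝ)
    (g : W → ℝ) :
    g ∈ LinearMap.ker (Matrix.toLin' (M - c • (1 : Matrix W W ℝ))) ↔ M.mulVec g = c • g := by
  rw [LinearMap.mem_ker, Matrix.toLin'_apply, Matrix.sub_mulVec, Matrix.smul_mulVec,
    Matrix.one_mulVec, sub_eq_zero]

end Aux

/-- nonzero eigenvalues of `P̂` give eigenvalues `2λ̂²-1` of `P`, with the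
same multiplicity. -/
theorem stmt6 [Fintype V] [DecidableEq V] (G : SimpleGraph V) [DecidableRel G.Adj]
    (hconn : G.Connected) (q : ℕ) (hq : 0 < q) (lam : ℝ) (hlam : lam ≠ 0)
    (h : IsEigenvalue (normAdj (qSubdivision G q)) lam) :
    IsEigenvalue (normAdj G) (2 * lam ^ 2 - 1) ∧
    eigMult (normAdj (qSubdivision G q)) lam = eigMult (normAdj G) (2 * lam ^ 2 - 1) := by
  by_cases hE : IsEmpty G.edgeSet
  · exfalso
    obtain ⟨v, hv, heq⟩ := h
    have hzero : normAdj (qSubdivision G q) = 0 := by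
      ext i j
      rw [Matrix.zero_apply]
      rcases i with u | p
      · rcases j with w | p
        · simp [normAdj]
        · exact (hE.false p.1).elim
      · exact (hE.false p.1).elim
    rw [hzero, Matrix.zero_mulVec] at heq
    exact hv ((smul_eq_zero.mp heq.symm).resolve_left hlam)
  · have hNE : Nonempty G.edgeSet := not_isEmpty_iff.mp hE
    obtain ⟨a, b, hab⟩ : ∃ a b, G.Adj a b := by
      obtain ⟨⟨e0, he0⟩⟩ := hNE
      induction e0 with
      | _ a b => exact ⟨a, b, (SimpleGraph.mem_edgeSet G).mp he0⟩
    have hdeg : ∀ v, 0 < G.degree v := by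
      intro v
      rw [SimpleGraph.degree_pos_iff_exists_adj]
      by_cases hv : v = a
      · exact ⟨b, hv ▸ hab⟩
      · obtain ⟨p⟩ := hconn.preconnected v a
        exact ⟨p.getVert 1, p.adj_snd (SimpleGraph.Walk.not_nil_of_ne hv)⟩
    obtain ⟨g, hg, heig⟩ := h
    constructor
    · refine ⟨g ∘ Sum.inl, ?_, dirB2 G q hq hdeg hlam g heig⟩
      intro h0
      apply hg
      rw [dirB1 G q hlam g heig, h0, psi_zero]
    · -- equality of multiplicities via a linear equivalence of eigenspaces
      unfold eigMult
      set K1 := LinearMap.ker (Matrix.toLin'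
        (normAdj (qSubdivision G q) - lam • (1 : Matrix _ _ ℝ))) with hK1
      set K2 := LinearMap.ker (Matrix.toLin'
        (normAdj G - (2 * lam ^ 2 - 1) • (1 : Matrix V V ℝ))) with hK2
      have hΦ : ∀ x ∈ K1, (LinearMap.funLeft ℝ ℝ Sum.inl) x ∈ K2 := by
        intro x hx
        rw [hK2, ker_mem_iff]
        exact dirB2 G q hq hdeg hlam x ((ker_mem_iff _ _ _).mp hx)
      have hΨ : ∀ x ∈ K2, (psiL G q lam) x ∈ K1 := by
        intro x hx
        rw [hK1, ker_mem_iff]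
        exact dirA G q hq hdeg hlam x ((ker_mem_iff _ _ _).mp hx)
      have h1 : ((LinearMap.funLeft ℝ ℝ Sum.inl).restrict hΦ).comp
          ((psiL G q lam).restrict hΨ) = LinearMap.id := by
        ext x
        rfl
      have h2 : ((psiL G q lam).restrict hΨ).comp
          ((LinearMap.funLeft ℝ ℝ Sum.inl).restrict hΦ) = LinearMap.id := by
        ext x
        have := (dirB1 G q hlam x.1 ((ker_mem_iff _ _ _).mp x.2)).symm
        exact congrFun this _
      let e : K1 ≃ₗ[ℝ] K2 :=
        LinearEquiv.ofLinear ((LinearMap.funLeft ℝ ℝ Sum.inl).restrict hΦ)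
          ((psiL G q lam).restrict hΨ) h1 h2
      exact e.finrank_eq
end

section
/- Let G be a simple connected non-bipartite graph with n nodes and m edges, and S_q(G) its q-subdivision graph. Then 0 is an eigenvalue of the normalized adjacency matrix of S_q(G) with multiplicity exactly mq - n. -/
open Finset

variable {V : Type*}

section StmtEight
open Matrix

variable [Fintype V] [DecidableEq V]

lemma qsub_adj_inl_inr (G : SimpleGraph V) (q : ℕ) (u : V) (p : G.edgeSet × Fin q) :
    (qSubdivision G q).Adj (Sum.inl u) (Sum.inr p) ↔ u ∈ (p.1 : Sym2 V) := Iff.rfl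

lemma qsub_not_adj_inl_inl (G : SimpleGraph V) (q : ℕ) (u u' : V) :
    ¬ (qSubdivision G q).Adj (Sum.inl u) (Sum.inl u') := fun h => h

lemma qsub_not_adj_inr_inr (G : SimpleGraph V) (q : ℕ) (p p' : G.edgeSet × Fin q) :
    ¬ (qSubdivision G q).Adj (Sum.inr p) (Sum.inr p') := fun h => h

lemma normAdj_symm [Fintype V] (G : SimpleGraph V) [DecidableRel G.Adj] (i j : V) :
    normAdj G i j = normAdj G j i := by
  have h := congrFun (congrFun (normAdj_isHermitian G) i) j
  simpa [Matrix.conjTranspose_apply] using h.symm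

lemma nontrivial_of_not_colorable (G : SimpleGraph V) (hnb : ¬ G.Colorable 2) :
    Nontrivial V := by
  by_contra h
  have hsub : Subsingleton V := not_nontrivial_iff_subsingleton.mp h
  exact hnb ⟨SimpleGraph.Coloring.mk (fun _ => 0) (by
    intro a b hab
    exact absurd hab (by rw [Subsingleton.elim a b]; exact G.irrefl))⟩

lemma exists_adj_of_connected (G : SimpleGraph V) (hconn : G.Connected)
    (hnb : ¬ G.Colorable 2) (u : V) : ∃ v, G.Adj u v := by
  have : Nontrivial V := nontrivial_of_not_colorable G hnb
  obtain ⟨v, hv⟩ := exists_ne u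
  obtain ⟨w⟩ := hconn.preconnected u v
  cases w with
  | nil => exact absurd rfl hv.symm
  | cons h _ => exact ⟨_, h⟩

lemma edge_rep (G : SimpleGraph V) (e : G.edgeSet) :
    ∃ a b, G.Adj a b ∧ (e : Sym2 V) = s(a, b) := by
  obtain ⟨s, hs⟩ := e
  induction s using Sym2.ind with
  | _ a b => exact ⟨a, b, (SimpleGraph.mem_edgeSet G).mp hs, rfl⟩

lemma qsub_degree_pos (G : SimpleGraph V) [DecidableRel G.Adj] (hconn : G.Connected)
    (hnb : ¬ G.Colorable 2) (q : ℕ) (hq : 0 < q) (w : V ⊕ (G.edgeSet × Fin q)) :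
    0 < (qSubdivision G q).degree w := by
  rw [SimpleGraph.degree_pos_iff_exists_adj]
  cases w with
  | inl u =>
    obtain ⟨v, hv⟩ := exists_adj_of_connected G hconn hnb u
    refine ⟨Sum.inr (⟨s(u, v), (SimpleGraph.mem_edgeSet G).mpr hv⟩, ⟨0, hq⟩), ?_⟩
    rw [qsub_adj_inl_inr]
    exact Sym2.mem_mk_left u v
  | inr p =>
    obtain ⟨a, b, hab, hrep⟩ := edge_rep G p.1
    refine ⟨Sum.inl a, ?_⟩
    have : a ∈ (p.1 : Sym2 V) := by rw [hrep]; exact Sym2.mem_mk_left a b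
    exact ((qSubdivision G q).adj_symm ((qsub_adj_inl_inr G q a p).mpr this))

theorem stmt8_aux [Fintype V] [DecidableEq V] (G : SimpleGraph V) [DecidableRel G.Adj]
    (hconn : G.Connected) (hnb : ¬ G.Colorable 2) (q : ℕ) (hq : 0 < q) :
    eigMult (normAdj (qSubdivision G q)) 0 + Fintype.card V = G.edgeFinset.card * q := by
  classical
  set S := qSubdivision G q with hS
  set M := normAdj S with hM
  set B : Matrix V (G.edgeSet × Fin q) ℝ :=
    Matrix.of (fun u p => M (Sum.inl u) (Sum.inr p)) with hB
  set d : V ⊕ (G.edgeSet × Fin q) → ℝ := fun w => ((S.degree w : ℕ) : ℝ) with hd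
  have hdpos : ∀ w, 0 < d w := by
    intro w
    simpa [hd] using qsub_degree_pos G hconn hnb q hq w
  -- entry formula for B
  have hBentry : ∀ u p, B u p =
      if u ∈ (p.1 : Sym2 V) then 1 / Real.sqrt (d (Sum.inl u) * d (Sum.inr p)) else 0 := by
    intro u p
    simp only [hB, hM, Matrix.of_apply, normAdj, hd]
    exact if_congr (qsub_adj_inl_inr G q u p) rfl rfl
  -- injectivity of Bᵀ
  have hinj : Function.Injective (Matrix.mulVecLin Bᵀ) := by
    rw [← LinearMap.ker_eq_bot, LinearMap.ker_eq_bot']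
    intro x hx
    set z : V → ℝ := fun u => x u / Real.sqrt (d (Sum.inl u)) with hz
    have hzadd : ∀ a b, G.Adj a b → z a + z b = 0 := by
      intro a b hab
      set p : G.edgeSet × Fin q := (⟨s(a, b), (SimpleGraph.mem_edgeSet G).mpr hab⟩, ⟨0, hq⟩)
        with hp
      have h0 : Bᵀ.mulVec x p = 0 := by
        have h00 : Bᵀ.mulVec x = 0 := by rw [← Matrix.mulVecLin_apply, hx]
        exact congrFun h00 p
      have h1' : (∑ u, (if u ∈ ({a, b} : Finset V)
          then (1 / Real.sqrt (d (Sum.inl u) * d (Sum.inr p))) * x u else 0)) =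
          Bᵀ.mulVec x p := by
        simp only [Matrix.mulVec, dotProduct, Matrix.transpose_apply]
        refine Finset.sum_congr rfl fun u _ => ?_
        rw [hBentry u p]
        have hmem : u ∈ ((p.1 : Sym2 V)) ↔ u ∈ ({a, b} : Finset V) := by
          simp [hp, Sym2.mem_iff]
        by_cases hmu : u ∈ ({a, b} : Finset V)
        · rw [if_pos hmu, if_pos (hmem.mpr hmu)]
        · rw [if_neg hmu, if_neg (fun hc => hmu (hmem.mp hc)), zero_mul]
      have h1 := h1'.trans h0
      rw [Finset.sum_ite_mem, Finset.univ_inter, Finset.sum_pair hab.ne] at h1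
      have hfac : ∀ u : V, (1 / Real.sqrt (d (Sum.inl u) * d (Sum.inr p))) * x u =
          z u * (1 / Real.sqrt (d (Sum.inr p))) := by
        intro u
        rw [Real.sqrt_mul (le_of_lt (hdpos (Sum.inl u)))]
        have h1 : Real.sqrt (d (Sum.inl u)) ≠ 0 :=
          ne_of_gt (Real.sqrt_pos.mpr (hdpos (Sum.inl u)))
        field_simp [hz]
        simp only [hz]; field_simp
      rw [hfac a, hfac b, ← add_mul] at h1
      have hne : (1 / Real.sqrt (d (Sum.inr p))) ≠ 0 :=
        one_div_ne_zero (ne_of_gt (Real.sqrt_pos.mpr (hdpos (Sum.inr p))))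
      exact (mul_eq_zero.mp h1).resolve_right hne
    have habs : ∀ a b : V, |z a| = |z b| := by
      intro a b
      obtain ⟨w⟩ := hconn.preconnected a b
      induction w with
      | nil => rfl
      | cons h _ ih =>
        rw [← ih]
        have h2 := hzadd _ _ h
        have : z _ = - z _ := eq_neg_of_add_eq_zero_left h2
        rw [this, abs_neg]
    have hz0 : ∀ u, z u = 0 := by
      by_contra hcon
      push_neg at hcon
      obtain ⟨u0, hu0⟩ := hcon
      refine hnb ⟨SimpleGraph.Coloring.mk (fun v => if 0 < z v then 0 else 1) ?_⟩
      intro a b hab hcol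
      have hzsum := hzadd a b hab
      have hza : z a ≠ 0 := by
        intro h
        apply hu0
        have := habs a u0
        rw [h, abs_zero] at this
        exact abs_eq_zero.mp this.symm
      split_ifs at hcol with h1 h2 h2
      · linarith
      · exact absurd hcol (by norm_num)
      · exact absurd hcol (by norm_num)
      · have : z a < 0 := lt_of_le_of_ne (not_lt.mp h1) hza
        have : z b ≤ 0 := not_lt.mp h2
        linarith
    funext u
    have h3 := hz0 u
    rw [hz] at h3
    have h4 : Real.sqrt (d (Sum.inl u)) ≠ 0 :=
      ne_of_gt (Real.sqrt_pos.mpr (hdpos (Sum.inl u)))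
    have := div_eq_zero_iff.mp h3
    simpa [h4] using this
  -- row decompositions
  have hrow1 : ∀ (v : (V ⊕ (G.edgeSet × Fin q)) → ℝ) (u : V),
      M.mulVec v (Sum.inl u) = B.mulVec (v ∘ Sum.inr) u := by
    intro v u
    simp only [Matrix.mulVec, dotProduct, Fintype.sum_sum_type]
    have hzero : ∀ u' : V, M (Sum.inl u) (Sum.inl u') * v (Sum.inl u') = 0 := by
      intro u'
      have : M (Sum.inl u) (Sum.inl u') = 0 := by
        simp only [hM, normAdj, Matrix.of_apply]
        rw [if_neg (qsub_not_adj_inl_inl G q u u')]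
      rw [this, zero_mul]
    rw [Finset.sum_congr rfl (fun u' _ => hzero u'), Finset.sum_const_zero, zero_add]
    rfl
  have hrow2 : ∀ (v : (V ⊕ (G.edgeSet × Fin q)) → ℝ) (p : G.edgeSet × Fin q),
      M.mulVec v (Sum.inr p) = Bᵀ.mulVec (v ∘ Sum.inl) p := by
    intro v p
    simp only [Matrix.mulVec, dotProduct, Fintype.sum_sum_type]
    have hzero : ∀ p' : G.edgeSet × Fin q,
        M (Sum.inr p) (Sum.inr p') * v (Sum.inr p') = 0 := by
      intro p'
      have : M (Sum.inr p) (Sum.inr p') = 0 := by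
        simp only [hM, normAdj, Matrix.of_apply]
        rw [if_neg (qsub_not_adj_inr_inr G q p p')]
      rw [this, zero_mul]
    rw [Finset.sum_congr rfl (fun p' _ => hzero p'), Finset.sum_const_zero, add_zero]
    refine Finset.sum_congr rfl fun u _ => ?_
    rw [show M (Sum.inr p) (Sum.inl u) = M (Sum.inl u) (Sum.inr p) from normAdj_symm S _ _]
    rfl
  -- kernel characterization
  have hker : ∀ v : (V ⊕ (G.edgeSet × Fin q)) → ℝ, M.mulVec v = 0 ↔
      (Bᵀ.mulVec (v ∘ Sum.inl) = 0 ∧ B.mulVec (v ∘ Sum.inr) = 0) := by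
    intro v
    constructor
    · intro h
      constructor
      · funext p; rw [← hrow2 v p, h]; rfl
      · funext u; rw [← hrow1 v u, h]; rfl
    · intro ⟨h1, h2⟩
      funext w
      cases w with
      | inl u => rw [hrow1 v u, h2]; rfl
      | inr p => rw [hrow2 v p, h1]; rfl
  -- the linear equivalence between the two kernels
  have hmem1 : ∀ v : (V ⊕ (G.edgeSet × Fin q)) → ℝ,
      v ∈ LinearMap.ker (Matrix.toLin' M) ↔ M.mulVec v = 0 := by
    intro v
    rw [LinearMap.mem_ker, Matrix.toLin'_apply]
  have hmem2 : ∀ y : (G.edgeSet × Fin q) → ℝ,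
      y ∈ LinearMap.ker B.mulVecLin ↔ B.mulVec y = 0 := by
    intro y
    rw [LinearMap.mem_ker, Matrix.mulVecLin_apply]
  set f0 : ((V ⊕ (G.edgeSet × Fin q)) → ℝ) →ₗ[ℝ] ((G.edgeSet × Fin q) → ℝ) :=
    LinearMap.funLeft ℝ ℝ Sum.inr with hf0
  have hfmem : ∀ v : LinearMap.ker (Matrix.toLin' M),
      f0 v.1 ∈ LinearMap.ker B.mulVecLin := by
    intro ⟨v, hv⟩
    rw [hmem2]
    exact ((hker v).mp ((hmem1 v).mp hv)).2
  set f : LinearMap.ker (Matrix.toLin' M) →ₗ[ℝ] LinearMap.ker B.mulVecLin :=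
    LinearMap.codRestrict _ (f0.comp (LinearMap.ker (Matrix.toLin' M)).subtype) hfmem
    with hf
  have hfbij : Function.Bijective f := by
    constructor
    · intro ⟨v, hv⟩ ⟨w, hw⟩ h
      have h' : v ∘ Sum.inr = w ∘ Sum.inr := congrArg Subtype.val h
      have hvl : v ∘ Sum.inl = 0 := by
        apply hinj
        rw [Matrix.mulVecLin_apply, map_zero, ((hker v).mp ((hmem1 v).mp hv)).1]
      have hwl : w ∘ Sum.inl = 0 := by
        apply hinj
        rw [Matrix.mulVecLin_apply, map_zero, ((hker w).mp ((hmem1 w).mp hw)).1]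
      refine Subtype.ext (funext fun x => ?_)
      cases x with
      | inl u =>
        have := congrFun hvl u
        have := congrFun hwl u
        simp_all
      | inr p => exact congrFun h' p
    · intro ⟨y, hy⟩
      refine ⟨⟨Sum.elim 0 y, ?_⟩, ?_⟩
      · rw [hmem1, hker]
        constructor
        · have : (Sum.elim (0 : V → ℝ) y) ∘ Sum.inl = 0 := rfl
          rw [this, Matrix.mulVec_zero]
        · have : (Sum.elim (0 : V → ℝ) y) ∘ Sum.inr = y := rfl
          rw [this]
          exact (hmem2 y).mp hy
      · exact Subtype.ext rfl
  have hequiv : Module.finrank ℝ (LinearMap.ker (Matrix.toLin' M)) =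
      Module.finrank ℝ (LinearMap.ker B.mulVecLin) :=
    (LinearEquiv.ofBijective f hfbij).finrank_eq
  -- rank computations
  have hrankT : Bᵀ.rank = Fintype.card V := by
    rw [Matrix.rank]
    rw [LinearMap.finrank_range_of_inj hinj]
    exact Module.finrank_fintype_fun_eq_card ℝ
  have hrankB : B.rank = Fintype.card V := by
    rw [← Matrix.rank_transpose, hrankT]
  have hrn := LinearMap.finrank_range_add_finrank_ker B.mulVecLin
  rw [Module.finrank_fintype_fun_eq_card] at hrn
  have hrange : Module.finrank ℝ (LinearMap.range B.mulVecLin) = Fintype.card V := hrankB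
  rw [hrange] at hrn
  have hcard : Fintype.card (G.edgeSet × Fin q) = G.edgeFinset.card * q := by
    rw [Fintype.card_prod, Fintype.card_fin, SimpleGraph.edgeFinset_card]
  rw [hcard] at hrn
  have hM0 : M - (0:ℝ) • (1 : Matrix _ _ ℝ) = M := by simp
  have heig : eigMult M 0 = Module.finrank ℝ (LinearMap.ker (Matrix.toLin' M)) := by
    rw [eigMult, hM0]
  rw [heig, hequiv]
  omega

end StmtEight

/-- for non-bipartite `G`, the multiplicity of the eigenvalue 0 of the
normalized adjacency matrix of `S_q(G)` is `mq - n`. -/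
theorem stmt8 [Fintype V] [DecidableEq V] (G : SimpleGraph V) [DecidableRel G.Adj]
    (hconn : G.Connected) (hnb : ¬ G.Colorable 2) (q : ℕ) (hq : 0 < q) :
    eigMult (normAdj (qSubdivision G q)) 0 + Fintype.card V = G.edgeFinset.card * q :=
  stmt8_aux G hconn hnb q hq
end
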